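/- Under Assumption 2 with constant δ > 0, for all integers m > n ≥ 1, sup_{μ ∈ Δ(Ω)} |v_m(μ) − v_n(μ)| ≤ (log|Ω| / (n·δ)) · V̄; consequently the sequence (v_n)_{n∈ℕ} converges uniformly on Δ(Ω) to v_∞. -/

import Mathlib

open Filter Topology
open scoped Classical

noncomputable section

/-- Δ(Ω): beliefs, i.e. probability distributions on the finite state space Ω,
as a subspace of Ω → ℝ (its topology agrees with the total-variation one). -/
abbrev Belief (Ω : Type*) [Fintype Ω] :=
  {p : Ω → ℝ // (∀ ω, 0 ≤ p ω) ∧ ∑ ω, p ω = 1}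

variable {Ω : Type*} [Fintype Ω]

/-- An element of F₀: a finite-support experiment, i.e. a finitely supported probability
distribution over beliefs (keys are the distinct posteriors p_j, values the positive
weights λ_j). -/
structure SPExp (Ω : Type*) [Fintype Ω] where
  w : Belief Ω →₀ ℝ
  nonneg : ∀ p, 0 ≤ w p
  sum_one : ∑ p ∈ w.support, w p = 1

namespace SPExp

/-- τ(e): the support of an experiment. -/
def tau (e : SPExp Ω) : Finset (Belief Ω) := e.w.support

/-- Expectation of a real-valued function under an experiment. -/
def expect (e : SPExp Ω) (f : Belief Ω → ℝ) : ℝ := ∑ p ∈ e.w.support, e.w p * f p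

/-- σ(e): the barycenter (expectation) of an experiment. -/
def sigma (e : SPExp Ω) : Belief Ω :=
  ⟨fun ω => ∑ p ∈ e.w.support, e.w p * p.val ω,
   fun ω => Finset.sum_nonneg fun p _ => mul_nonneg (e.nonneg p) (p.2.1 ω),
   by
     calc ∑ ω, ∑ p ∈ e.w.support, e.w p * p.val ω
         = ∑ p ∈ e.w.support, ∑ ω, e.w p * p.val ω := Finset.sum_comm
       _ = ∑ p ∈ e.w.support, e.w p * ∑ ω, p.val ω := by
           refine Finset.sum_congr rfl fun p _ => ?_
           rw [Finset.mul_sum]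
       _ = ∑ p ∈ e.w.support, e.w p := by
           refine Finset.sum_congr rfl fun p _ => ?_
           rw [p.2.2, mul_one]
       _ = 1 := e.sum_one⟩

/-- The trivial experiment (1, p). -/
def triv (p : Belief Ω) : SPExp Ω where
  w := Finsupp.single p 1
  nonneg := fun q => by
    rw [Finsupp.single_apply]
    split <;> norm_num
  sum_one := by
    rw [Finsupp.support_single_ne_zero _ one_ne_zero]
    simp

end SPExp

/-- T: the set of trivial experiments. -/
def Trivials (Ω : Type*) [Fintype Ω] : Set (SPExp Ω) := Set.range SPExp.triv

/-- Weak convergence of experiments, viewed as Borel probability measures on Δ(Ω). -/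
def WeakTendsto (es : ℕ → SPExp Ω) (e : SPExp Ω) : Prop :=
  ∀ f : Belief Ω → ℝ, Continuous f →
    Tendsto (fun i => (es i).expect f) atTop (𝓝 (e.expect f))

/-- Convergence of beliefs in total variation. -/
def TVTendsto (ps : ℕ → Belief Ω) (p : Belief Ω) : Prop :=
  Tendsto (fun i => ∑ ω, |(ps i).val ω - p.val ω|) atTop (𝓝 0)

/-- Histories, most recent step first: entries are (experiment taken, realized posterior);
the starting belief is kept separately. -/
abbrev Hist (Ω : Type*) [Fintype Ω] := List (SPExp Ω × Belief Ω)

/-- last(ξ): the current belief after history ξ started at μ. -/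
def lastBelief (μ : Belief Ω) : Hist Ω → Belief Ω
  | [] => μ
  | (_, p) :: _ => p

/-- Pr[ξ]: the probability of a history. -/
def histProb : Hist Ω → ℝ
  | [] => 1
  | (e, p) :: ξ => e.w p * histProb ξ

/-- A sequential persuasion starting from μ with feasible experiments F, given by its
history-dependent choice of the next (feasible, Bayes-plausible) experiment.  An n-step
sequential persuasion is such a strategy used for n steps; an infinite sequential
persuasion is the strategy itself. -/
structure SeqP {Ω : Type*} [Fintype Ω] (F : Set (SPExp Ω)) (μ : Belief Ω) where
  next : Hist Ω → SPExp Ω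
  feasible : ∀ ξ, next ξ ∈ F
  bayes : ∀ ξ, (next ξ).sigma = lastBelief μ ξ

variable {F : Set (SPExp Ω)} {μ : Belief Ω}

/-- Expectation of g over the n-step histories of S extending ξ. -/
def histExp (S : SeqP F μ) (g : Hist Ω → ℝ) : ℕ → Hist Ω → ℝ
  | 0, ξ => g ξ
  | n + 1, ξ => (S.next ξ).expect fun p => histExp S g n ((S.next ξ, p) :: ξ)

/-- Ξ_n: the set of n-step histories of S. -/
def Hists (S : SeqP F μ) : ℕ → Set (Hist Ω)
  | 0 => {[]}
  | n + 1 => {ξ' | ∃ ξ ∈ Hists S n, ∃ p ∈ (S.next ξ).tau, ξ' = (S.next ξ, p) :: ξ}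

/-- ξ padded by l trivial steps. -/
def padHist (μ : Belief Ω) (ξ : Hist Ω) (l : ℕ) : Hist Ω :=
  List.replicate l (SPExp.triv (lastBelief μ ξ), lastBelief μ ξ) ++ ξ

/-- S terminates after ξ: all subsequent choices (along trivial continuations of ξ)
are the trivial experiment. -/
def TerminatesAfter (S : SeqP F μ) (ξ : Hist Ω) : Prop :=
  ∀ l : ℕ, S.next (padHist μ ξ l) = SPExp.triv (lastBelief μ ξ)

/-- 𝒱(S⁽ⁿ⁾) = E[v(b_n)], the expected utility of the n-step persuasion given by the
first n steps of S. -/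
def stepUtility (v : Belief Ω → ℝ) (S : SeqP F μ) (n : ℕ) : ℝ :=
  histExp S (fun ξ => v (lastBelief μ ξ)) n []

/-- Pr[S terminates after n steps]. -/
def termProb (S : SeqP F μ) (n : ℕ) : ℝ :=
  histExp S (fun ξ => if TerminatesAfter S ξ then 1 else 0) n []

/-- 𝒱(S) for an infinite sequential persuasion S. -/
def infUtility (v : Belief Ω → ℝ) (S : SeqP F μ) : ℝ :=
  ⨆ n : ℕ, histExp S (fun ξ => if TerminatesAfter S ξ then v (lastBelief μ ξ) else 0) n []

/-- Pr[b_n ∈ O] for the belief b_n induced by S after n steps. -/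
def massIn (S : SeqP F μ) (O : Set (Belief Ω)) (n : ℕ) : ℝ :=
  histExp S (fun ξ => if lastBelief μ ξ ∈ O then 1 else 0) n []

/-- v_n(p): the optimal value over n-step sequential persuasions starting from p. -/
def vN (F : Set (SPExp Ω)) (v : Belief Ω → ℝ) (n : ℕ) (p : Belief Ω) : ℝ :=
  ⨆ S : SeqP F p, stepUtility v S n

/-- v_∞(p): the optimal value over infinite sequential persuasions starting from p. -/
def vInf (F : Set (SPExp Ω)) (v : Belief Ω → ℝ) (p : Belief Ω) : ℝ :=
  ⨆ S : SeqP F p, infUtility v S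

/-- Assumption 1: a uniform support bound h, and weak closedness of F. -/
def Assumption1 (F : Set (SPExp Ω)) (h : ℕ) : Prop :=
  (∀ e ∈ F, e.tau.card ≤ h) ∧
  ∀ es : ℕ → SPExp Ω, (∀ i, es i ∈ F) → ∀ e : SPExp Ω, WeakTendsto es e → e ∈ F

/-- Shannon entropy of a belief. -/
def entropy (p : Belief Ω) : ℝ := -∑ ω, p.val ω * Real.log (p.val ω)

/-- Assumption 2: every nontrivial feasible experiment lowers expected entropy by δ. -/
def Assumption2 (F : Set (SPExp Ω)) (δ : ℝ) : Prop :=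
  ∀ e ∈ F \ Trivials Ω, e.expect entropy ≤ entropy e.sigma - δ

/-- S is (effectively) an n-step sequential persuasion: after n steps it only takes
trivial experiments. -/
def IsNStep (S : SeqP F μ) (n : ℕ) : Prop :=
  ∀ ξ : Hist Ω, n ≤ ξ.length → S.next ξ = SPExp.triv (lastBelief μ ξ)

/-- Assumption 3 at prior μ: a sequence of finite-step sequential persuasions whose
values tend to v_∞(μ) and which terminate at a uniform rate. -/
def Assumption3 (F : Set (SPExp Ω)) (v : Belief Ω → ℝ) (μ : Belief Ω) : Prop :=
  ∃ (nk : ℕ → ℕ) (Sk : ℕ → SeqP F μ),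
    (∀ k, IsNStep (Sk k) (nk k)) ∧
    Tendsto (fun k => stepUtility v (Sk k) (nk k)) atTop (𝓝 (vInf F v μ)) ∧
    ∀ ε : ℝ, 0 < ε → ∃ N : ℕ, ∀ k, N ≤ nk k → 1 - ε ≤ termProb (Sk k) N

/-- v̂: the concave closure of v (the value of unconstrained Bayesian persuasion). -/
def concaveClosure (v : Belief Ω → ℝ) (p : Belief Ω) : ℝ :=
  sSup {x : ℝ | ∃ e : SPExp Ω, e.sigma = p ∧ x = e.expect v}

/-- O is implementable for (μ, F). -/
def Implementable (F : Set (SPExp Ω)) (μ : Belief Ω) (O : Set (Belief Ω)) : Prop :=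
  ∀ ε : ℝ, 0 < ε → ∃ (n : ℕ) (S : SeqP F μ), 1 - ε < massIn S O n

/-- S is a Markov sequential persuasion compatible with (μ, D, Z, ρ). -/
def MarkovCompatible (S : SeqP F μ) (D Z : Set (Belief Ω)) (ρ : Belief Ω → SPExp Ω) : Prop :=
  ∀ ξ : Hist Ω,
    (lastBelief μ ξ ∈ D → S.next ξ = ρ (lastBelief μ ξ)) ∧
    (lastBelief μ ξ ∈ Z → S.next ξ = SPExp.triv (lastBelief μ ξ))

/-- The j-th child of vertex m at depth n of the infinite h-ary tree. -/
def treeChild {h n : ℕ} (m : Fin (h ^ n)) (j : Fin h) : Fin (h ^ (n + 1)) :=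
  ⟨m.val * h + j.val, by
    have h1 : m.val + 1 ≤ h ^ n := m.isLt
    have h2 : j.val < h := j.isLt
    calc m.val * h + j.val < m.val * h + h := by omega
      _ = (m.val + 1) * h := by ring
      _ ≤ h ^ n * h := Nat.mul_le_mul h1 le_rfl
      _ = h ^ (n + 1) := (pow_succ h n).symm⟩

/-- An h-branching sequential persuasion starting from μ. -/
structure HBranch (Ω : Type*) [Fintype Ω] (F : Set (SPExp Ω)) (h : ℕ) (μ : Belief Ω) where
  π : ∀ n : ℕ, Fin (h ^ n) → ℝ
  β : ∀ n : ℕ, Fin (h ^ n) → Belief Ω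
  η : ∀ n : ℕ, Fin (h ^ n) → SPExp Ω
  π_nonneg : ∀ n m, 0 ≤ π n m
  π_sum : ∀ n : ℕ, ∑ m, π n m = 1
  η_mem : ∀ n m, η n m ∈ F
  β_root : ∀ m, β 0 m = μ
  compat_sigma : ∀ n m, (η n m).sigma = β n m
  compat_tau : ∀ (n : ℕ) (m : Fin (h ^ n)), ∀ p ∈ (η n m).tau,
    ∃ j : Fin h, β (n + 1) (treeChild m j) = p
  consistent : ∀ (n : ℕ) (m : Fin (h ^ n)) (p : Belief Ω),
    (∑ j : Fin h, if β (n + 1) (treeChild m j) = p then π (n + 1) (treeChild m j) else 0)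
      = π n m * (η n m).w p

/-- c' (at depth n + l) is a descendant of c (at depth n) in the h-ary tree. -/
def Descendant {h : ℕ} : {n : ℕ} → (l : ℕ) → Fin (h ^ n) → Fin (h ^ (n + l)) → Prop
  | _, 0, c, c' => c = c'
  | _, l + 1, c, c' => ∃ c'' j, Descendant l c c'' ∧ c' = treeChild c'' j

namespace HBranch

variable {h : ℕ}

/-- B terminates after vertex m at depth n. -/
def TermAfter (B : HBranch Ω F h μ) (n : ℕ) (m : Fin (h ^ n)) : Prop :=
  B.η n m ∈ Trivials Ω ∧
  ∀ (l : ℕ) (c' : Fin (h ^ (n + l))), Descendant l m c' → 0 < B.π (n + l) c' →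
    B.η (n + l) c' ∈ Trivials Ω

/-- Pr[B terminates after n steps]. -/
def termProb (B : HBranch Ω F h μ) (n : ℕ) : ℝ :=
  ∑ m : Fin (h ^ n), if B.TermAfter n m then B.π n m else 0

end HBranch

/-- B represents the infinite sequential persuasion S (via maps r_n : C_n → Ξ_n). -/
def Represents (S : SeqP F μ) {h : ℕ} (B : HBranch Ω F h μ) : Prop :=
  ∃ r : ∀ n : ℕ, Fin (h ^ n) → Hist Ω,
    ∀ n : ℕ,
      (∀ c, r n c ∈ Hists S n) ∧
      (∀ ξ ∈ Hists S n, histProb ξ = ∑ c, if r n c = ξ then B.π n c else 0) ∧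
      (∀ c, lastBelief μ (r n c) = B.β n c ∧ S.next (r n c) = B.η n c) ∧
      (∀ l : ℕ, ∀ ξ ∈ Hists S n, ∀ ξ' ∈ Hists S (n + l),
        (ξ <:+ ξ' ↔
          ∀ c' : Fin (h ^ (n + l)), r (n + l) c' = ξ' →
            ∃ c : Fin (h ^ n), r n c = ξ ∧ Descendant l c c'))

/-- The number of nontrivial experiments taken along a history. -/
def nontrivCount (ξ : Hist Ω) : ℕ :=
  ξ.countP fun s => decide (s.1 ∉ Trivials Ω)

end

noncomputable section Aux

open SPExp

variable {Ω : Type*} [Fintype Ω] {F : Set (SPExp Ω)} {μ : Belief Ω}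

namespace SPExp

lemma expect_triv (p : Belief Ω) (f : Belief Ω → ℝ) : (triv p).expect f = f p := by
  unfold expect triv
  simp [Finsupp.support_single_ne_zero _ one_ne_zero]

lemma sigma_triv (p : Belief Ω) : (triv p).sigma = p := by
  apply Subtype.ext; funext ω
  show ∑ q ∈ (triv p).w.support, (triv p).w q * q.val ω = p.val ω
  unfold triv
  simp [Finsupp.support_single_ne_zero _ one_ne_zero]

lemma expect_mono (e : SPExp Ω) {f g : Belief Ω → ℝ} (h : ∀ p ∈ e.w.support, f p ≤ g p) :
    e.expect f ≤ e.expect g :=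
  Finset.sum_le_sum fun p hp => mul_le_mul_of_nonneg_left (h p hp) (e.nonneg p)

lemma expect_const (e : SPExp Ω) (c : ℝ) : e.expect (fun _ => c) = c := by
  unfold expect; rw [← Finset.sum_mul, e.sum_one, one_mul]

lemma expect_add (e : SPExp Ω) (f g : Belief Ω → ℝ) :
    e.expect (fun p => f p + g p) = e.expect f + e.expect g := by
  unfold expect; simp [mul_add, Finset.sum_add_distrib]

lemma expect_smul (e : SPExp Ω) (c : ℝ) (f : Belief Ω → ℝ) :
    e.expect (fun p => c * f p) = c * e.expect f := by
  unfold expect; rw [Finset.mul_sum]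
  exact Finset.sum_congr rfl fun p _ => by ring

lemma expect_le (e : SPExp Ω) {f : Belief Ω → ℝ} {C : ℝ} (h : ∀ p, f p ≤ C) :
    e.expect f ≤ C :=
  (expect_mono e fun p _ => h p).trans_eq (expect_const e C)

lemma le_expect (e : SPExp Ω) {f : Belief Ω → ℝ} {C : ℝ} (h : ∀ p, C ≤ f p) :
    C ≤ e.expect f :=
  (expect_const e C).symm.trans_le (expect_mono e fun p _ => h p)

end SPExp

lemma mem_Trivials_iff {e : SPExp Ω} : e ∈ Trivials Ω ↔ e = triv e.sigma := by
  constructor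
  · rintro ⟨q, rfl⟩; rw [sigma_triv]
  · intro h; exact ⟨e.sigma, h.symm⟩

lemma triv_mem_Trivials (p : Belief Ω) : triv p ∈ Trivials Ω := ⟨p, rfl⟩

lemma lastBelief_cons (μ : Belief Ω) (x : SPExp Ω × Belief Ω) (ξ : Hist Ω) :
    lastBelief μ (x :: ξ) = x.2 := by cases x; rfl

lemma lastBelief_concat (μ : Belief Ω) (ζ : Hist Ω) (x : SPExp Ω × Belief Ω) :
    lastBelief μ (ζ ++ [x]) = lastBelief x.2 ζ := by
  cases ζ with
  | nil => cases x; rfl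
  | cons a t => cases a; rfl

lemma lastBelief_padHist (μ : Belief Ω) (ξ : Hist Ω) (l : ℕ) :
    lastBelief μ (padHist μ ξ l) = lastBelief μ ξ := by
  cases l with
  | zero => rfl
  | succ l => rfl

lemma length_padHist (μ : Belief Ω) (ξ : Hist Ω) (l : ℕ) :
    (padHist μ ξ l).length = l + ξ.length := by
  simp [padHist]

/-! ### histExp lemmas -/

lemma histExp_congr {Ω : Type*} [Fintype Ω] {F₁ F₂ : Set (SPExp Ω)} {μ₁ μ₂ : Belief Ω}
    (S₁ : SeqP F₁ μ₁) (S₂ : SeqP F₂ μ₂) (g₁ g₂ : Hist Ω → ℝ) :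
    ∀ (r : ℕ) (ξ : Hist Ω),
      (∀ ξ', ξ <:+ ξ' → ξ'.length < ξ.length + r → S₁.next ξ' = S₂.next ξ') →
      (∀ ξ', ξ <:+ ξ' → ξ'.length = ξ.length + r → g₁ ξ' = g₂ ξ') →
      histExp S₁ g₁ r ξ = histExp S₂ g₂ r ξ
  | 0, ξ, _, hg => hg ξ (List.suffix_refl ξ) (by omega)
  | r + 1, ξ, hS, hg => by
    have he : S₁.next ξ = S₂.next ξ := hS ξ (List.suffix_refl ξ) (by omega)
    show (S₁.next ξ).expect (fun p => histExp S₁ g₁ r ((S₁.next ξ, p) :: ξ))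
        = (S₂.next ξ).expect (fun p => histExp S₂ g₂ r ((S₂.next ξ, p) :: ξ))
    rw [← he]
    refine congrArg _ (funext fun p => ?_)
    refine histExp_congr S₁ S₂ g₁ g₂ r ((S₁.next ξ, p) :: ξ) (fun ξ' hsuf hlen => ?_)
      (fun ξ' hsuf hlen => ?_)
    · exact hS ξ' ((List.suffix_cons _ _).trans hsuf) (by simp at hlen ⊢; omega)
    · exact hg ξ' ((List.suffix_cons _ _).trans hsuf) (by simp at hlen ⊢; omega)

lemma histExp_mono (S : SeqP F μ) {g₁ g₂ : Hist Ω → ℝ} (h : ∀ ξ, g₁ ξ ≤ g₂ ξ) :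
    ∀ (r : ℕ) (ξ : Hist Ω), histExp S g₁ r ξ ≤ histExp S g₂ r ξ
  | 0, ξ => h ξ
  | r + 1, ξ => expect_mono _ fun p _ => histExp_mono S h r _

lemma histExp_const (S : SeqP F μ) (c : ℝ) :
    ∀ (r : ℕ) (ξ : Hist Ω), histExp S (fun _ => c) r ξ = c
  | 0, _ => rfl
  | r + 1, ξ => by
    show (S.next ξ).expect (fun p => histExp S (fun _ => c) r _) = c
    calc (S.next ξ).expect (fun p => histExp S (fun _ => c) r ((S.next ξ, p) :: ξ))
        = (S.next ξ).expect (fun _ => c) := by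
          exact congrArg _ (funext fun p => histExp_const S c r _)
      _ = c := expect_const _ c

lemma histExp_add (S : SeqP F μ) (g₁ g₂ : Hist Ω → ℝ) :
    ∀ (r : ℕ) (ξ : Hist Ω),
      histExp S (fun ξ' => g₁ ξ' + g₂ ξ') r ξ = histExp S g₁ r ξ + histExp S g₂ r ξ
  | 0, _ => rfl
  | r + 1, ξ => by
    show (S.next ξ).expect _ = (S.next ξ).expect _ + (S.next ξ).expect _
    rw [← expect_add]
    exact congrArg _ (funext fun p => histExp_add S g₁ g₂ r _)

lemma histExp_smul (S : SeqP F μ) (c : ℝ) (g : Hist Ω → ℝ) :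
    ∀ (r : ℕ) (ξ : Hist Ω),
      histExp S (fun ξ' => c * g ξ') r ξ = c * histExp S g r ξ
  | 0, _ => rfl
  | r + 1, ξ => by
    show (S.next ξ).expect _ = c * (S.next ξ).expect _
    rw [← expect_smul]
    exact congrArg _ (funext fun p => histExp_smul S c g r _)

lemma histExp_le (S : SeqP F μ) {g : Hist Ω → ℝ} {C : ℝ} (h : ∀ ξ, g ξ ≤ C)
    (r : ℕ) (ξ : Hist Ω) : histExp S g r ξ ≤ C :=
  (histExp_mono S h r ξ).trans_eq (histExp_const S C r ξ)

lemma le_histExp (S : SeqP F μ) {g : Hist Ω → ℝ} {C : ℝ} (h : ∀ ξ, C ≤ g ξ)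
    (r : ℕ) (ξ : Hist Ω) : C ≤ histExp S g r ξ :=
  (histExp_const S C r ξ).symm.trans_le (histExp_mono S h r ξ)

lemma histExp_comp (S : SeqP F μ) (g : Hist Ω → ℝ) (b : ℕ) :
    ∀ (a : ℕ) (ξ : Hist Ω),
      histExp S g (a + b) ξ = histExp S (fun ζ => histExp S g b ζ) a ξ
  | 0, ξ => by simp [histExp]
  | a + 1, ξ => by
    have : a + 1 + b = (a + b) + 1 := by omega
    rw [this]
    show (S.next ξ).expect _ = (S.next ξ).expect _
    exact congrArg _ (funext fun p => histExp_comp S g b a _)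

lemma histExp_triv_tail (S : SeqP F μ) (f : Belief Ω → ℝ) :
    ∀ (r : ℕ) (ξ : Hist Ω),
      (∀ ξ', ξ <:+ ξ' → S.next ξ' = triv (lastBelief μ ξ')) →
      histExp S (fun ζ => f (lastBelief μ ζ)) r ξ = f (lastBelief μ ξ)
  | 0, ξ, _ => rfl
  | r + 1, ξ, h => by
    have he : S.next ξ = triv (lastBelief μ ξ) := h ξ (List.suffix_refl ξ)
    show (S.next ξ).expect (fun p => histExp S _ r ((S.next ξ, p) :: ξ)) = _
    rw [he, expect_triv]
    have := histExp_triv_tail S f r ((triv (lastBelief μ ξ), lastBelief μ ξ) :: ξ)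
      (fun ξ' hsuf => h ξ' ((List.suffix_cons _ _).trans hsuf))
    rw [this, lastBelief_cons]

/-! ### nontrivCount -/

lemma nontrivCount_cons (e : SPExp Ω) (p : Belief Ω) (ξ : Hist Ω) :
    nontrivCount ((e, p) :: ξ) =
      nontrivCount ξ + (if e ∈ Trivials Ω then 0 else 1) := by
  unfold nontrivCount
  rw [List.countP_cons]
  by_cases h : e ∈ Trivials Ω <;> simp [h]

lemma nontrivCount_le_of_suffix {ξ ξ' : Hist Ω} (h : ξ <:+ ξ') :
    nontrivCount ξ ≤ nontrivCount ξ' :=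
  h.sublist.countP_le

/-! ### entropy -/

lemma entropy_eq_sum_negMulLog (p : Belief Ω) :
    entropy p = ∑ ω, Real.negMulLog (p.val ω) := by
  unfold entropy
  rw [← Finset.sum_neg_distrib]
  exact Finset.sum_congr rfl fun ω _ => by rw [Real.negMulLog]; ring

lemma entropy_nonneg (p : Belief Ω) : 0 ≤ entropy p := by
  rw [entropy_eq_sum_negMulLog]
  refine Finset.sum_nonneg fun ω _ => Real.negMulLog_nonneg (p.2.1 ω) ?_
  calc p.val ω ≤ ∑ ω', p.val ω' :=
        Finset.single_le_sum (fun ω' _ => p.2.1 ω') (Finset.mem_univ ω)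
    _ = 1 := p.2.2

lemma entropy_le_log_card (p : Belief Ω) :
    entropy p ≤ Real.log (Fintype.card Ω) := by
  classical
  set s : Finset Ω := Finset.univ.filter (fun ω => p.val ω ≠ 0) with hs
  have hmem : ∀ ω ∈ s, 0 < p.val ω := by
    intro ω hω
    rw [hs, Finset.mem_filter] at hω
    exact lt_of_le_of_ne (p.2.1 ω) (Ne.symm hω.2)
  have hsum : ∑ ω ∈ s, p.val ω = 1 := by
    have h := Finset.sum_subset (f := fun ω => p.val ω)
      (Finset.filter_subset (fun ω => p.val ω ≠ 0) Finset.univ)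
      (fun ω _ hω => by
        by_contra hne
        exact hω (Finset.mem_filter.2 ⟨Finset.mem_univ ω, hne⟩))
    rw [hs]
    exact h.trans p.2.2
  have hne : s.Nonempty := Finset.nonempty_of_sum_ne_zero (by rw [hsum]; norm_num)
  have hjensen := (strictConcaveOn_log_Ioi.concaveOn).le_map_sum
    (t := s) (w := fun ω => p.val ω) (p := fun ω => (p.val ω)⁻¹)
    (fun ω hω => (hmem ω hω).le) hsum
    (fun ω hω => Set.mem_Ioi.2 (inv_pos.2 (hmem ω hω)))
  have hpt : ∑ ω ∈ s, p.val ω • (p.val ω)⁻¹ = (s.card : ℝ) := by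
    rw [Finset.sum_congr rfl (fun ω hω => by
      rw [smul_eq_mul, mul_inv_cancel₀ (hmem ω hω).ne'])]
    simp
  have h1 : entropy p = ∑ ω ∈ s, p.val ω • Real.log (p.val ω)⁻¹ := by
    rw [entropy_eq_sum_negMulLog]
    rw [← Finset.sum_subset (Finset.filter_subset (fun ω => p.val ω ≠ 0) Finset.univ)
      (fun ω _ hω => by
        have : p.val ω = 0 := by
          by_contra hne
          exact hω (Finset.mem_filter.2 ⟨Finset.mem_univ ω, hne⟩)
        rw [this, Real.negMulLog_zero])]
    refine Finset.sum_congr rfl fun ω hω => ?_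
    rw [Real.negMulLog, Real.log_inv, smul_eq_mul]
    ring
  rw [h1]
  calc ∑ ω ∈ s, p.val ω • Real.log (p.val ω)⁻¹
      ≤ Real.log (∑ ω ∈ s, p.val ω • (p.val ω)⁻¹) := hjensen
    _ = Real.log (s.card : ℝ) := by rw [hpt]
    _ ≤ Real.log (Fintype.card Ω) := by
        refine Real.log_le_log ?_ ?_
        · exact_mod_cast Finset.card_pos.2 hne
        · exact_mod_cast Finset.card_le_card (Finset.subset_univ s)

/-! ### basic strategies -/

/-- The strategy taking only trivial experiments. -/
def trivSeqP (hTF : Trivials Ω ⊆ F) (μ : Belief Ω) : SeqP F μ where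
  next := fun ξ => triv (lastBelief μ ξ)
  feasible := fun ξ => hTF (triv_mem_Trivials _)
  bayes := fun ξ => sigma_triv _

/-- S truncated to its first n steps (trivial thereafter). -/
def padSeqP (hTF : Trivials Ω ⊆ F) (S : SeqP F μ) (n : ℕ) : SeqP F μ where
  next := fun ξ => if ξ.length < n then S.next ξ else triv (lastBelief μ ξ)
  feasible := fun ξ => by
    by_cases h : ξ.length < n
    · simpa [h] using S.feasible ξ
    · simpa [h] using hTF (triv_mem_Trivials _)
  bayes := fun ξ => by
    by_cases h : ξ.length < n
    · simpa [h] using S.bayes ξ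
    · simpa [h] using sigma_triv _

lemma padSeqP_next_of_lt (hTF : Trivials Ω ⊆ F) (S : SeqP F μ) (n : ℕ) {ξ : Hist Ω}
    (h : ξ.length < n) : (padSeqP hTF S n).next ξ = S.next ξ := if_pos h

lemma padSeqP_next_of_ge (hTF : Trivials Ω ⊆ F) (S : SeqP F μ) (n : ℕ) {ξ : Hist Ω}
    (h : n ≤ ξ.length) : (padSeqP hTF S n).next ξ = triv (lastBelief μ ξ) :=
  if_neg (by omega)

lemma stepUtility_padSeqP (hTF : Trivials Ω ⊆ F) (v : Belief Ω → ℝ) (S : SeqP F μ)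
    {n m : ℕ} (hnm : n ≤ m) :
    stepUtility v (padSeqP hTF S n) m = stepUtility v S n := by
  set S' := padSeqP hTF S n with hS'
  unfold stepUtility
  have hm : m = n + (m - n) := by omega
  rw [hm, histExp_comp]
  refine histExp_congr S' S _ _ n [] (fun ξ' hsuf hlen => ?_) (fun ξ' hsuf hlen => ?_)
  · exact padSeqP_next_of_lt hTF S n (by simpa using hlen)
  · exact histExp_triv_tail S' (fun q => v q) (m - n) ξ' (fun ζ hζ =>
      padSeqP_next_of_ge hTF S n (le_trans (by omega) hζ.length_le))

lemma bddAbove_stepUtility {v : Belief Ω → ℝ} {Vhi : ℝ} (hvhi : ∀ p, v p ≤ Vhi)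
    (μ : Belief Ω) (n : ℕ) :
    BddAbove (Set.range fun S : SeqP F μ => stepUtility v S n) := by
  refine ⟨Vhi, ?_⟩
  rintro x ⟨S, rfl⟩
  exact histExp_le S (fun ξ => hvhi _) n []

lemma stepUtility_le_vN {v : Belief Ω → ℝ} {Vhi : ℝ} (hvhi : ∀ p, v p ≤ Vhi)
    (S : SeqP F μ) (n : ℕ) : stepUtility v S n ≤ vN F v n μ :=
  le_ciSup (bddAbove_stepUtility hvhi μ n) S

lemma v_le_vN (hTF : Trivials Ω ⊆ F) {v : Belief Ω → ℝ} {Vhi : ℝ}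
    (hvhi : ∀ p, v p ≤ Vhi) (n : ℕ) (p : Belief Ω) : v p ≤ vN F v n p := by
  have h : stepUtility v (trivSeqP hTF p) n = v p :=
    histExp_triv_tail (trivSeqP hTF p) v n [] (fun ξ' _ => rfl)
  calc v p = stepUtility v (trivSeqP hTF p) n := h.symm
    _ ≤ vN F v n p := stepUtility_le_vN hvhi _ n

lemma vN_mono (hTF : Trivials Ω ⊆ F) {v : Belief Ω → ℝ} {Vhi : ℝ}
    (hvhi : ∀ p, v p ≤ Vhi) {n m : ℕ} (hnm : n ≤ m) (p : Belief Ω) :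
    vN F v n p ≤ vN F v m p := by
  haveI : Nonempty (SeqP F p) := ⟨trivSeqP hTF p⟩
  refine ciSup_le fun S => ?_
  calc stepUtility v S n = stepUtility v (padSeqP hTF S n) m :=
        (stepUtility_padSeqP hTF v S hnm).symm
    _ ≤ vN F v m p := stepUtility_le_vN hvhi _ m

/-! ### gluing (Bellman) -/

/-- First take experiment e, then follow T q from the realized posterior q. -/
def glueNext (e : SPExp Ω) (T : ∀ q : Belief Ω, SeqP F q) : Hist Ω → SPExp Ω := fun ξ =>
  match ξ.getLast? with
  | none => e
  | some s => (T s.2).next ξ.dropLast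

lemma glueNext_nil (e : SPExp Ω) (T : ∀ q : Belief Ω, SeqP F q) :
    glueNext e T [] = e := rfl

lemma glueNext_concat (e : SPExp Ω) (T : ∀ q : Belief Ω, SeqP F q)
    (ζ : Hist Ω) (x : SPExp Ω × Belief Ω) :
    glueNext e T (ζ ++ [x]) = (T x.2).next ζ := by
  unfold glueNext
  rw [List.getLast?_concat, List.dropLast_concat]

def glueSeqP (hTF : Trivials Ω ⊆ F) {e : SPExp Ω} (he : e ∈ F) {p : Belief Ω}
    (hσ : e.sigma = p) (T : ∀ q : Belief Ω, SeqP F q) : SeqP F p where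
  next := glueNext e T
  feasible := fun ξ => by
    rcases List.eq_nil_or_concat ξ with rfl | ⟨ζ, x, rfl⟩
    · exact he
    · rw [List.concat_eq_append, glueNext_concat]; exact (T x.2).feasible ζ
  bayes := fun ξ => by
    rcases List.eq_nil_or_concat ξ with rfl | ⟨ζ, x, rfl⟩
    · exact hσ
    · rw [List.concat_eq_append, glueNext_concat, (T x.2).bayes ζ, lastBelief_concat]

lemma histExp_glue (hTF : Trivials Ω ⊆ F) {e : SPExp Ω} (he : e ∈ F) {p : Belief Ω}
    (hσ : e.sigma = p) (T : ∀ q : Belief Ω, SeqP F q) (f : Belief Ω → ℝ)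
    (x : SPExp Ω × Belief Ω) :
    ∀ (j : ℕ) (ζ : Hist Ω),
      histExp (glueSeqP hTF he hσ T) (fun ξ => f (lastBelief p ξ)) j (ζ ++ [x])
        = histExp (T x.2) (fun ξ => f (lastBelief x.2 ξ)) j ζ
  | 0, ζ => by simp [histExp, lastBelief_concat]
  | j + 1, ζ => by
    have hnext : (glueSeqP hTF he hσ T).next (ζ ++ [x]) = (T x.2).next ζ :=
      glueNext_concat e T ζ x
    show ((glueSeqP hTF he hσ T).next (ζ ++ [x])).expect _ = ((T x.2).next ζ).expect _
    rw [hnext]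
    refine congrArg _ (funext fun q => ?_)
    have hc : ((T x.2).next ζ, q) :: (ζ ++ [x]) = (((T x.2).next ζ, q) :: ζ) ++ [x] := by
      simp
    rw [hc]
    exact histExp_glue hTF he hσ T f x j _

lemma bellman (hTF : Trivials Ω ⊆ F) {v : Belief Ω → ℝ} {Vhi : ℝ}
    (hvhi : ∀ p, v p ≤ Vhi) {e : SPExp Ω} (he : e ∈ F) {p : Belief Ω}
    (hσ : e.sigma = p) (k : ℕ) :
    e.expect (vN F v k) ≤ vN F v (k + 1) p := by
  refine le_of_forall_pos_le_add fun ε hε => ?_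
  have h1 : ∀ q : Belief Ω, ∃ Sq : SeqP F q, vN F v k q - ε < stepUtility v Sq k := by
    intro q
    haveI : Nonempty (SeqP F q) := ⟨trivSeqP hTF q⟩
    exact exists_lt_of_lt_ciSup (sub_lt_self _ hε)
  choose T hT using h1
  set Sg := glueSeqP hTF he hσ T with hSg
  have hstep : stepUtility v Sg (k + 1) = e.expect (fun q => stepUtility v (T q) k) := by
    unfold stepUtility
    show (Sg.next []).expect (fun q => histExp Sg _ k ((Sg.next [], q) :: [])) = _
    have hn : Sg.next [] = e := rfl
    rw [hn]
    refine congrArg _ (funext fun q => ?_)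
    have : ((e, q) : SPExp Ω × Belief Ω) :: [] = ([] : Hist Ω) ++ [(e, q)] := by simp
    rw [this]
    exact histExp_glue hTF he hσ T v (e, q) k []
  have h2 : e.expect (vN F v k) ≤ e.expect (fun q => stepUtility v (T q) k) + ε := by
    have : e.expect (fun q => vN F v k q - ε) ≤ e.expect (fun q => stepUtility v (T q) k) :=
      expect_mono e fun q _ => (hT q).le
    have heq : e.expect (fun q => vN F v k q - ε) = e.expect (vN F v k) - ε := by
      have := expect_add e (fun q => vN F v k q - ε) (fun _ => ε)
      rw [expect_const] at this
      simp only [sub_add_cancel] at this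
      linarith
    linarith
  calc e.expect (vN F v k) ≤ e.expect (fun q => stepUtility v (T q) k) + ε := h2
    _ = stepUtility v Sg (k + 1) + ε := by rw [hstep]
    _ ≤ vN F v (k + 1) p + ε := by
        have := stepUtility_le_vN (F := F) hvhi Sg (k + 1)
        linarith

/-! ### entropy descent and Markov bound -/

lemma entropy_descent {δ : ℝ} (hδ : 0 < δ) (hA2 : Assumption2 F δ) (S : SeqP F μ) :
    ∀ (r : ℕ) (ξ : Hist Ω),
      histExp S (fun ξ' => entropy (lastBelief μ ξ') + δ * nontrivCount ξ') r ξ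
        ≤ entropy (lastBelief μ ξ) + δ * nontrivCount ξ
  | 0, ξ => le_refl _
  | r + 1, ξ => by
    set e := S.next ξ with hedef
    show e.expect (fun q => histExp S _ r ((e, q) :: ξ)) ≤ _
    have hstep : ∀ q : Belief Ω,
        histExp S (fun ξ' => entropy (lastBelief μ ξ') + δ * nontrivCount ξ') r ((e, q) :: ξ)
          ≤ entropy q + δ * nontrivCount ((e, q) :: ξ) :=
      fun q => entropy_descent hδ hA2 S r ((e, q) :: ξ)
    have hcount : ∀ q : Belief Ω, (nontrivCount ((e, q) :: ξ) : ℝ)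
        = (nontrivCount ξ : ℝ) + (if e ∈ Trivials Ω then 0 else 1) := by
      intro q
      rw [nontrivCount_cons]
      by_cases h : e ∈ Trivials Ω <;> simp [h]
    have hσ : e.sigma = lastBelief μ ξ := S.bayes ξ
    by_cases htr : e ∈ Trivials Ω
    · have heq : e = triv (lastBelief μ ξ) := by
        have := mem_Trivials_iff.1 htr
        rw [hσ] at this
        exact this
      calc e.expect (fun q => histExp S _ r ((e, q) :: ξ))
          ≤ e.expect (fun q => entropy q + δ * nontrivCount ((e, q) :: ξ)) :=
            expect_mono e fun q _ => hstep q
        _ = e.expect (fun q => entropy q + δ * nontrivCount ξ) := by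
            refine congrArg _ (funext fun q => ?_)
            rw [hcount q]
            simp [htr]
        _ = e.expect entropy + δ * nontrivCount ξ := by
            rw [← expect_const e (δ * nontrivCount ξ), ← expect_add]
            exact congrArg _ (funext fun q => by rw [expect_const])
        _ ≤ entropy (lastBelief μ ξ) + δ * nontrivCount ξ := by
            have : e.expect entropy = entropy (lastBelief μ ξ) := by
              conv_lhs => rw [heq]
              rw [expect_triv]
            linarith
    · have hA := hA2 e ⟨S.feasible ξ, htr⟩
      calc e.expect (fun q => histExp S _ r ((e, q) :: ξ))
          ≤ e.expect (fun q => entropy q + δ * nontrivCount ((e, q) :: ξ)) :=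
            expect_mono e fun q _ => hstep q
        _ = e.expect (fun q => entropy q + (δ * nontrivCount ξ + δ)) := by
            refine congrArg _ (funext fun q => ?_)
            rw [hcount q]
            simp [htr]
            ring
        _ = e.expect entropy + (δ * nontrivCount ξ + δ) := by
            rw [← expect_const e (δ * (nontrivCount ξ : ℝ) + δ), ← expect_add]
            exact congrArg _ (funext fun q => by rw [expect_const])
        _ ≤ (entropy e.sigma - δ) + (δ * nontrivCount ξ + δ) := by linarith
        _ = entropy (lastBelief μ ξ) + δ * nontrivCount ξ := by rw [hσ]; ring

/-! ### counting truncation -/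

lemma key_trunc (hTF : Trivials Ω ⊆ F) {v : Belief Ω → ℝ} {Vhi : ℝ}
    (hvnn : ∀ p, 0 ≤ v p) (hvhi : ∀ p, v p ≤ Vhi) (S : SeqP F μ) :
    ∀ (r k : ℕ) (ξ : Hist Ω),
      histExp S (fun ξ' => if nontrivCount ξ' - nontrivCount ξ ≤ k
          then v (lastBelief μ ξ') else 0) r ξ
        ≤ vN F v k (lastBelief μ ξ)
  | 0, k, ξ => by
    show (if nontrivCount ξ - nontrivCount ξ ≤ k then v (lastBelief μ ξ) else 0) ≤ _
    rw [if_pos (by omega)]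
    exact v_le_vN hTF hvhi k _
  | r + 1, k, ξ => by
    set e := S.next ξ with hedef
    set L := lastBelief μ ξ with hL
    show e.expect (fun q => histExp S
        (fun ξ' => if nontrivCount ξ' - nontrivCount ξ ≤ k then v (lastBelief μ ξ') else 0)
        r ((e, q) :: ξ)) ≤ vN F v k L
    have hσ : e.sigma = L := S.bayes ξ
    by_cases htr : e ∈ Trivials Ω
    · have heq : e = triv L := by
        have := mem_Trivials_iff.1 htr
        rw [hσ] at this
        exact this
      have hcnt : nontrivCount ((triv L, L) :: ξ) = nontrivCount ξ := by
        rw [nontrivCount_cons]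
        simp [triv_mem_Trivials]
      rw [heq, expect_triv]
      have hrw : (fun ξ' => if nontrivCount ξ' - nontrivCount ξ ≤ k
            then v (lastBelief μ ξ') else 0)
          = (fun ξ' => if nontrivCount ξ' - nontrivCount ((triv L, L) :: ξ) ≤ k
            then v (lastBelief μ ξ') else 0) := by
        rw [hcnt]
      rw [hrw]
      exact key_trunc hTF hvnn hvhi S r k ((triv L, L) :: ξ)
    · have hc1 : ∀ q : Belief Ω, nontrivCount ((e, q) :: ξ) = nontrivCount ξ + 1 := by
        intro q
        rw [nontrivCount_cons]
        simp [htr]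
      cases k with
      | zero =>
        have hz : ∀ q : Belief Ω, histExp S
            (fun ξ' => if nontrivCount ξ' - nontrivCount ξ ≤ 0
              then v (lastBelief μ ξ') else 0) r ((e, q) :: ξ) = 0 := by
          intro q
          have h0 := histExp_congr S S
            (fun ξ' => if nontrivCount ξ' - nontrivCount ξ ≤ 0 then v (lastBelief μ ξ') else 0)
            (fun _ => 0) r ((e, q) :: ξ)
            (fun _ _ _ => rfl)
            (fun ξ' hsuf _ => by
              have h1 : nontrivCount ((e, q) :: ξ) ≤ nontrivCount ξ' :=
                nontrivCount_le_of_suffix hsuf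
              rw [hc1 q] at h1
              have hneg : ¬ (nontrivCount ξ' - nontrivCount ξ ≤ 0) := by omega
              simp only [hneg, if_false])
          rw [h0, histExp_const]
        calc e.expect (fun q => histExp S _ r ((e, q) :: ξ))
            = e.expect (fun _ => 0) := congrArg _ (funext hz)
          _ = 0 := expect_const e 0
          _ ≤ v L := hvnn L
          _ ≤ vN F v 0 L := v_le_vN hTF hvhi 0 L
      | succ k' =>
        have hstep : ∀ q : Belief Ω, histExp S
            (fun ξ' => if nontrivCount ξ' - nontrivCount ξ ≤ k' + 1
              then v (lastBelief μ ξ') else 0) r ((e, q) :: ξ) ≤ vN F v k' q := by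
          intro q
          have h0 := histExp_congr S S
            (fun ξ' => if nontrivCount ξ' - nontrivCount ξ ≤ k' + 1
              then v (lastBelief μ ξ') else 0)
            (fun ξ' => if nontrivCount ξ' - nontrivCount ((e, q) :: ξ) ≤ k'
              then v (lastBelief μ ξ') else 0)
            r ((e, q) :: ξ)
            (fun _ _ _ => rfl)
            (fun ξ' hsuf _ => by
              have h1 : nontrivCount ((e, q) :: ξ) ≤ nontrivCount ξ' :=
                nontrivCount_le_of_suffix hsuf
              have h2 := hc1 q
              have hiff : nontrivCount ξ' - nontrivCount ξ ≤ k' + 1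
                  ↔ nontrivCount ξ' - nontrivCount ((e, q) :: ξ) ≤ k' := by omega
              simp only [hiff])
          rw [h0]
          exact key_trunc hTF hvnn hvhi S r k' ((e, q) :: ξ)
        calc e.expect (fun q => histExp S _ r ((e, q) :: ξ))
            ≤ e.expect (vN F v k') := expect_mono e fun q _ => hstep q
          _ ≤ vN F v (k' + 1) L := bellman hTF hvhi (S.feasible ξ) hσ k'

/-! ### the main tail bound -/

lemma vN_tail_bound [Nonempty Ω] (hTF : Trivials Ω ⊆ F) {v : Belief Ω → ℝ} {Vlo Vhi : ℝ}
    (hVlo : 0 < Vlo) (hVV : Vlo ≤ Vhi) (hvlo : ∀ p, Vlo ≤ v p) (hvhi : ∀ p, v p ≤ Vhi)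
    {δ : ℝ} (hδ : 0 < δ) (hA2 : Assumption2 F δ) (n m : ℕ) (hn : 1 ≤ n) (μ : Belief Ω) :
    vN F v m μ ≤ vN F v n μ + Real.log (Fintype.card Ω) / (n * δ) * Vhi := by
  haveI : Nonempty (SeqP F μ) := ⟨trivSeqP hTF μ⟩
  have hvnn : ∀ p, 0 ≤ v p := fun p => le_trans hVlo.le (hvlo p)
  have hVhi : (0:ℝ) ≤ Vhi := le_trans hVlo.le hVV
  have hlog : 0 ≤ Real.log (Fintype.card Ω) := by
    refine Real.log_nonneg ?_
    exact_mod_cast Fintype.card_pos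
  have hn' : (0:ℝ) < (n:ℝ) := by exact_mod_cast hn
  refine ciSup_le fun S => ?_
  set gG : Hist Ω → ℝ := fun ξ => if nontrivCount ξ ≤ n then v (lastBelief μ ξ) else 0
    with hgG
  set gB : Hist Ω → ℝ := fun ξ => if nontrivCount ξ ≤ n then 0 else v (lastBelief μ ξ)
    with hgB
  set ind : Hist Ω → ℝ := fun ξ => if n + 1 ≤ nontrivCount ξ then 1 else 0 with hind
  have hsplit : stepUtility v S m = histExp S gG m [] + histExp S gB m [] := by
    rw [← histExp_add]
    unfold stepUtility
    refine congrArg (fun g => histExp S g m []) (funext fun ξ => ?_)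
    by_cases h : nontrivCount ξ ≤ n <;> simp [hgG, hgB, h]
  have hG : histExp S gG m [] ≤ vN F v n μ := by
    have h0 := key_trunc hTF hvnn hvhi S m n []
    have heq : gG = fun ξ' => if nontrivCount ξ' - nontrivCount ([] : Hist Ω) ≤ n
        then v (lastBelief μ ξ') else 0 := by
      funext ξ'
      have : nontrivCount ([] : Hist Ω) = 0 := rfl
      rw [hgG, this, Nat.sub_zero]
    rw [heq]
    exact h0
  have hBind : ∀ ξ, gB ξ ≤ Vhi * ind ξ := by
    intro ξ
    by_cases h : nontrivCount ξ ≤ n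
    · have h2 : ¬ (n + 1 ≤ nontrivCount ξ) := by omega
      simp [hgB, hind, h, h2, Nat.not_lt.mpr h]
    · have h2 : n + 1 ≤ nontrivCount ξ := by omega
      simp [hgB, hind, h, h2, Nat.lt_of_succ_le h2]
      exact hvhi _
  have hB : histExp S gB m [] ≤ Vhi * histExp S ind m [] := by
    calc histExp S gB m [] ≤ histExp S (fun ξ => Vhi * ind ξ) m [] :=
          histExp_mono S hBind m []
      _ = Vhi * histExp S ind m [] := histExp_smul S Vhi ind m []
  have hP : ((n:ℝ) + 1) * δ * histExp S ind m [] ≤ Real.log (Fintype.card Ω) := by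
    have h1 : ∀ ξ, ((n:ℝ) + 1) * δ * ind ξ
        ≤ entropy (lastBelief μ ξ) + δ * nontrivCount ξ := by
      intro ξ
      have he := entropy_nonneg (lastBelief μ ξ)
      by_cases h : n + 1 ≤ nontrivCount ξ
      · have hcast : ((n:ℝ) + 1) ≤ (nontrivCount ξ : ℝ) := by exact_mod_cast h
        simp only [hind, h, if_true, mul_one]
        nlinarith
      · simp only [hind, h, if_false, mul_zero]
        positivity
    calc ((n:ℝ) + 1) * δ * histExp S ind m []
        = histExp S (fun ξ => ((n:ℝ) + 1) * δ * ind ξ) m [] :=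
          (histExp_smul S _ ind m []).symm
      _ ≤ histExp S (fun ξ => entropy (lastBelief μ ξ) + δ * nontrivCount ξ) m [] :=
          histExp_mono S h1 m []
      _ ≤ entropy (lastBelief μ ([] : Hist Ω)) + δ * nontrivCount ([] : Hist Ω) :=
          entropy_descent hδ hA2 S m []
      _ = entropy μ := by
          have h0 : nontrivCount ([] : Hist Ω) = 0 := rfl
          rw [h0]
          simp [lastBelief]
      _ ≤ Real.log (Fintype.card Ω) := entropy_le_log_card μ
  have hPn : histExp S ind m [] ≤ Real.log (Fintype.card Ω) / ((n:ℝ) * δ) := by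
    have hpos : (0:ℝ) < ((n:ℝ) + 1) * δ := by positivity
    have h2 : histExp S ind m [] ≤ Real.log (Fintype.card Ω) / (((n:ℝ) + 1) * δ) := by
      rw [le_div_iff₀ hpos, mul_comm]
      exact hP
    refine h2.trans ?_
    refine div_le_div_of_nonneg_left hlog (by positivity) ?_
    nlinarith
  calc stepUtility v S m = histExp S gG m [] + histExp S gB m [] := hsplit
    _ ≤ vN F v n μ + Vhi * histExp S ind m [] := by linarith
    _ ≤ vN F v n μ + Vhi * (Real.log (Fintype.card Ω) / ((n:ℝ) * δ)) := by
        have := mul_le_mul_of_nonneg_left hPn hVhi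
        linarith
    _ = vN F v n μ + Real.log (Fintype.card Ω) / ((n:ℝ) * δ) * Vhi := by ring

/-! ### relating vN and vInf -/

lemma vN_le_vInf (hTF : Trivials Ω ⊆ F) {v : Belief Ω → ℝ} {Vhi : ℝ}
    (hvnn : ∀ p, 0 ≤ v p) (hvhi : ∀ p, v p ≤ Vhi) (n : ℕ) (μ : Belief Ω) :
    vN F v n μ ≤ vInf F v μ := by
  haveI : Nonempty (SeqP F μ) := ⟨trivSeqP hTF μ⟩
  have hVhi : (0:ℝ) ≤ Vhi := le_trans (hvnn μ) (hvhi μ)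
  have hpt : ∀ (T : SeqP F μ) (ξ : Hist Ω),
      (if TerminatesAfter T ξ then v (lastBelief μ ξ) else 0) ≤ Vhi := by
    intro T ξ
    by_cases h : TerminatesAfter T ξ
    · simpa [h] using hvhi _
    · simpa [h] using hVhi
  refine ciSup_le fun S => ?_
  set S' := padSeqP hTF S n with hS'
  have h1 : stepUtility v S n = stepUtility v S' n := by
    unfold stepUtility
    exact histExp_congr S S' _ _ n []
      (fun ξ' _ hlen => (padSeqP_next_of_lt hTF S n (by simpa using hlen)).symm)
      (fun _ _ _ => rfl)
  have hterm : ∀ ξ : Hist Ω, ξ.length = n → TerminatesAfter S' ξ := by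
    intro ξ hlen l
    have hge : n ≤ (padHist μ ξ l).length := by
      rw [length_padHist]
      omega
    rw [padSeqP_next_of_ge hTF S n hge, lastBelief_padHist]
  have h2 : stepUtility v S' n
      = histExp S' (fun ξ => if TerminatesAfter S' ξ then v (lastBelief μ ξ) else 0) n [] := by
    unfold stepUtility
    exact histExp_congr S' S' _ _ n [] (fun _ _ _ => rfl)
      (fun ξ' _ hlen => by rw [if_pos (hterm ξ' (by simpa using hlen))])
  have h3 : histExp S' (fun ξ => if TerminatesAfter S' ξ then v (lastBelief μ ξ) else 0) n []
      ≤ infUtility v S' := by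
    refine le_ciSup (f := fun m => histExp S'
      (fun ξ => if TerminatesAfter S' ξ then v (lastBelief μ ξ) else 0) m []) ?_ n
    refine ⟨Vhi, ?_⟩
    rintro x ⟨m, rfl⟩
    exact histExp_le S' (hpt S') m []
  have h4 : infUtility v S' ≤ vInf F v μ := by
    refine le_ciSup (f := fun T : SeqP F μ => infUtility v T) ?_ S'
    refine ⟨Vhi, ?_⟩
    rintro x ⟨T, rfl⟩
    exact ciSup_le fun m => histExp_le T (hpt T) m []
  calc stepUtility v S n
      = histExp S' (fun ξ => if TerminatesAfter S' ξ then v (lastBelief μ ξ) else 0) n [] :=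
        h1.trans h2
    _ ≤ infUtility v S' := h3
    _ ≤ vInf F v μ := h4

lemma vInf_le_vN_add [Nonempty Ω] (hTF : Trivials Ω ⊆ F) {v : Belief Ω → ℝ} {Vlo Vhi : ℝ}
    (hVlo : 0 < Vlo) (hVV : Vlo ≤ Vhi) (hvlo : ∀ p, Vlo ≤ v p) (hvhi : ∀ p, v p ≤ Vhi)
    {δ : ℝ} (hδ : 0 < δ) (hA2 : Assumption2 F δ) (n : ℕ) (hn : 1 ≤ n) (μ : Belief Ω) :
    vInf F v μ ≤ vN F v n μ + Real.log (Fintype.card Ω) / (n * δ) * Vhi := by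
  haveI : Nonempty (SeqP F μ) := ⟨trivSeqP hTF μ⟩
  have hvnn : ∀ p, 0 ≤ v p := fun p => le_trans hVlo.le (hvlo p)
  have hVhi : (0:ℝ) ≤ Vhi := le_trans hVlo.le hVV
  have hlog : 0 ≤ Real.log (Fintype.card Ω) := by
    refine Real.log_nonneg ?_
    exact_mod_cast Fintype.card_pos
  have hn' : (0:ℝ) < (n:ℝ) := by exact_mod_cast hn
  have hbnn : 0 ≤ Real.log (Fintype.card Ω) / ((n:ℝ) * δ) * Vhi := by
    apply mul_nonneg _ hVhi
    apply div_nonneg hlog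
    positivity
  refine ciSup_le fun S => ciSup_le fun m => ?_
  have h1 : histExp S (fun ξ => if TerminatesAfter S ξ then v (lastBelief μ ξ) else 0) m []
      ≤ stepUtility v S m := by
    refine histExp_mono S (fun ξ => ?_) m []
    by_cases h : TerminatesAfter S ξ
    · simp [h]
    · simpa [h] using hvnn _
  have h2 : stepUtility v S m ≤ vN F v m μ := stepUtility_le_vN hvhi S m
  have h3 : vN F v m μ ≤ vN F v n μ + Real.log (Fintype.card Ω) / ((n:ℝ) * δ) * Vhi :=
    vN_tail_bound hTF hVlo hVV hvlo hvhi hδ hA2 n m hn μ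
  linarith

end Aux

/-- Under Assumption 2, the tail bound sup_μ |v_m(μ) − v_n(μ)| ≤ (log|Ω|/(nδ))·V̄ for
m > n ≥ 1, and hence (v_n) converges uniformly to v_∞. -/
theorem vN_uniform_convergence {Ω : Type*} [Fintype Ω] [Nonempty Ω]
    (F : Set (SPExp Ω)) (hTF : Trivials Ω ⊆ F)
    (v : Belief Ω → ℝ) (Vlo Vhi : ℝ) (hVlo : 0 < Vlo) (hVV : Vlo ≤ Vhi)
    (hvlo : ∀ p, Vlo ≤ v p) (hvhi : ∀ p, v p ≤ Vhi)
    (husc : UpperSemicontinuous v)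
    (δ : ℝ) (hδ : 0 < δ) (hA2 : Assumption2 F δ) :
    (∀ m n : ℕ, 1 ≤ n → n < m → ∀ μ : Belief Ω,
      |vN F v m μ - vN F v n μ| ≤ Real.log (Fintype.card Ω) / (n * δ) * Vhi) ∧
    TendstoUniformly (fun n p => vN F v n p) (vInf F v) Filter.atTop := by
  have hvnn : ∀ p, 0 ≤ v p := fun p => le_trans hVlo.le (hvlo p)
  have hVhi : (0:ℝ) ≤ Vhi := le_trans hVlo.le hVV
  have hlog : 0 ≤ Real.log (Fintype.card Ω) := by
    refine Real.log_nonneg ?_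
    exact_mod_cast Fintype.card_pos
  constructor
  · intro m n hn hnm μ
    have hmono := vN_mono hTF hvhi hnm.le μ
    rw [abs_of_nonneg (sub_nonneg.2 hmono)]
    have := vN_tail_bound hTF hVlo hVV hvlo hvhi hδ hA2 n m hn μ
    linarith
  · rw [Metric.tendstoUniformly_iff]
    intro ε hε
    set C := Real.log (Fintype.card Ω) * Vhi / δ with hC
    obtain ⟨N, hN⟩ := exists_nat_gt (C / ε)
    rw [eventually_atTop]
    refine ⟨max N 1, fun n hn => fun μ => ?_⟩
    have hn1 : 1 ≤ n := le_trans (le_max_right N 1) hn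
    have hnN : N ≤ n := le_trans (le_max_left N 1) hn
    have hnpos : (0:ℝ) < (n:ℝ) := by exact_mod_cast hn1
    have ha : vN F v n μ ≤ vInf F v μ := vN_le_vInf hTF hvnn hvhi n μ
    have hb : vInf F v μ ≤ vN F v n μ + Real.log (Fintype.card Ω) / (n * δ) * Vhi :=
      vInf_le_vN_add hTF hVlo hVV hvlo hvhi hδ hA2 n hn1 μ
    have hbound : Real.log (Fintype.card Ω) / ((n:ℝ) * δ) * Vhi = C / n := by
      rw [hC, div_div, div_mul_eq_mul_div, mul_comm (n:ℝ) δ]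
    have hlt : C / (n:ℝ) < ε := by
      rw [div_lt_iff₀ hnpos]
      have h1 : C / ε < (n:ℝ) := lt_of_lt_of_le hN (by exact_mod_cast hnN)
      calc C = (C / ε) * ε := (div_mul_cancel₀ C hε.ne').symm
        _ < (n:ℝ) * ε := mul_lt_mul_of_pos_right h1 hε
        _ = ε * (n:ℝ) := mul_comm _ _
    rw [Real.dist_eq, abs_of_nonneg (sub_nonneg.2 ha)]
    rw [hbound] at hb
    linarith
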